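/- Let G be a totally disconnected locally compact group, φ : G → G a topological automorphism, and U an open compact subgroup. Set Cₙ(φ,U) = ⋂_{i=0}^{n-1} φ^{-i}(U) and cₙ = [U : Cₙ(φ,U)]. Then the limit H_top(φ,U) = lim_{n→∞} (log cₙ)/n exists and equals log α, where α is the eventual value of the sequence αₙ = c_{n+1}/cₙ. -/

import Mathlib

open Filter Topology

variable {G : Type*} [Group G]

/-- The `n`-th `φ`-cotrajectory `Cₙ(φ,U) = ⋂_{i<n} φ^{-i}(U)`. -/
def cotrajN (φ : MulAut G) (U : Subgroup G) (n : ℕ) : Subgroup G :=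
  ⨅ i ∈ Finset.range n, Subgroup.comap (φ ^ i).toMonoidHom U

/-- `cₙ = [U : Cₙ(φ,U)]`. -/
noncomputable def entIdx (φ : MulAut G) (U : Subgroup G) (n : ℕ) : ℕ :=
  (cotrajN φ U n).relIndex U

lemma cotrajN_zero (φ : MulAut G) (U : Subgroup G) : cotrajN φ U 0 = ⊤ := by
  simp [cotrajN]

lemma cotrajN_succ (φ : MulAut G) (U : Subgroup G) (n : ℕ) :
    cotrajN φ U (n + 1) = cotrajN φ U n ⊓ Subgroup.comap (φ ^ n).toMonoidHom U := by
  rw [cotrajN, cotrajN, Finset.range_add_one]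
  rw [show (insert n (Finset.range n) : Finset ℕ) = {n} ∪ Finset.range n from rfl]
  rw [Finset.iInf_union, inf_comm]
  simp

lemma cotrajN_antitone (φ : MulAut G) (U : Subgroup G) (n : ℕ) :
    cotrajN φ U (n + 1) ≤ cotrajN φ U n := by
  rw [cotrajN_succ]; exact inf_le_left

lemma cotrajN_le (φ : MulAut G) (U : Subgroup G) {n : ℕ} (hn : 1 ≤ n) :
    cotrajN φ U n ≤ U := by
  have h : cotrajN φ U n ≤ Subgroup.comap ((φ : MulAut G) ^ 0).toMonoidHom U := by
    exact biInf_le _ (Finset.mem_range.mpr hn)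
  exact fun x hx => h hx

lemma continuous_mulAut_pow [TopologicalSpace G] [IsTopologicalGroup G] (φ : MulAut G)
    (hφ : Continuous φ) (i : ℕ) : Continuous ⇑(φ ^ i) := by
  induction i with
  | zero => simpa using continuous_id
  | succ n ih =>
    have : ⇑(φ ^ (n + 1)) = ⇑(φ ^ n) ∘ ⇑φ := by
      ext x; simp [pow_succ]
    rw [this]; exact ih.comp hφ

lemma isOpen_cotrajN [TopologicalSpace G] [IsTopologicalGroup G] (φ : MulAut G)
    (hφ : Continuous φ) (U : Subgroup G) (hUo : IsOpen (U : Set G)) (n : ℕ) :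
    IsOpen ((cotrajN φ U n : Subgroup G) : Set G) := by
  induction n with
  | zero => rw [cotrajN_zero]; simpa using isOpen_univ
  | succ n ih =>
    rw [cotrajN_succ]
    rw [Subgroup.coe_inf]
    exact ih.inter (hUo.preimage (continuous_mulAut_pow φ hφ n))

lemma relindex_ne_zero_aux [TopologicalSpace G] [IsTopologicalGroup G] (K L : Subgroup G)
    (hK : IsOpen (K : Set G)) (hLo : IsOpen (L : Set G)) (hLc : IsCompact (L : Set G)) :
    K.relIndex L ≠ 0 := by
  haveI : CompactSpace L := isCompact_iff_compactSpace.mp hLc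
  have hopen : IsOpen ((K.subgroupOf L : Subgroup L) : Set L) := by
    have : ((K.subgroupOf L : Subgroup L) : Set L) = Subtype.val ⁻¹' (K : Set G) := by
      rfl
    rw [this]
    exact hK.preimage continuous_subtype_val
  haveI : Finite (L ⧸ K.subgroupOf L) :=
    Subgroup.quotient_finite_of_isOpen _ hopen
  exact Subgroup.index_ne_zero_of_finite

theorem tendsto_log_entIdx_div [TopologicalSpace G] [IsTopologicalGroup G]
    [LocallyCompactSpace G] [TotallyDisconnectedSpace G]
    (φ : MulAut G) (hφ : Continuous φ) (hφ' : Continuous φ⁻¹)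
    (U : Subgroup G) (hUo : IsOpen (U : Set G)) (hUc : IsCompact (U : Set G))
    (α n₀ : ℕ) (hn₀ : 1 ≤ n₀)
    (hα : ∀ n ≥ n₀, (cotrajN φ U (n + 1)).relIndex (cotrajN φ U n) = α) :
    Tendsto (fun n : ℕ => Real.log (entIdx φ U n) / n) atTop (nhds (Real.log α)) := by
  have hopen := isOpen_cotrajN φ hφ U hUo
  have hcompact : ∀ n, 1 ≤ n → IsCompact ((cotrajN φ U n : Subgroup G) : Set G) := fun n hn =>
    hUc.of_isClosed_subset ((cotrajN φ U n).isClosed_of_isOpen (hopen n)) (cotrajN_le φ U hn)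
  -- c := entIdx at n₀ is nonzero
  have hc : entIdx φ U n₀ ≠ 0 := relindex_ne_zero_aux _ _ (hopen n₀) hUo hUc
  -- α nonzero
  have hα0 : α ≠ 0 := by
    rw [← hα n₀ le_rfl]
    exact relindex_ne_zero_aux _ _ (hopen (n₀ + 1)) (hopen n₀) (hcompact n₀ hn₀)
  -- recurrence
  have hrec : ∀ n ≥ n₀, entIdx φ U (n + 1) = α * entIdx φ U n := by
    intro n hn
    have h1 : cotrajN φ U (n + 1) ≤ cotrajN φ U n := cotrajN_antitone φ U n
    have h2 : cotrajN φ U n ≤ U := cotrajN_le φ U (le_trans hn₀ hn)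
    have := Subgroup.relIndex_mul_relIndex (cotrajN φ U (n + 1)) (cotrajN φ U n) U h1 h2
    rw [hα n hn] at this
    exact this.symm
  -- closed form
  have hcf : ∀ k : ℕ, entIdx φ U (n₀ + k) = entIdx φ U n₀ * α ^ k := by
    intro k
    induction k with
    | zero => simp
    | succ k ih =>
      rw [← Nat.add_assoc, hrec (n₀ + k) (Nat.le_add_right _ _), ih, pow_succ]; ring
  set c : ℕ := entIdx φ U n₀ with hcdef
  -- the limit
  have key : Tendsto (fun n : ℕ => Real.log c / n + (((n : ℝ) - n₀) / n) * Real.log α)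
      atTop (nhds (Real.log α)) := by
    have h1 : Tendsto (fun n : ℕ => Real.log c / n) atTop (nhds 0) :=
      tendsto_const_div_atTop_nhds_zero_nat _
    have h2 : Tendsto (fun n : ℕ => ((n : ℝ) - n₀) / n) atTop (nhds 1) := by
      have : Tendsto (fun n : ℕ => 1 - (n₀ : ℝ) / n) atTop (nhds (1 - 0)) :=
        tendsto_const_nhds.sub (tendsto_const_div_atTop_nhds_zero_nat _)
      rw [sub_zero] at this
      apply this.congr'
      filter_upwards [eventually_gt_atTop 0] with n hn
      have : (n : ℝ) ≠ 0 := Nat.cast_ne_zero.mpr hn.ne'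
      field_simp
    have := h1.add (h2.mul_const (Real.log α))
    simpa using this
  apply key.congr'
  filter_upwards [eventually_ge_atTop n₀, eventually_gt_atTop 0] with n hn hn1
  obtain ⟨k, rfl⟩ := Nat.exists_eq_add_of_le hn
  have hne : (c : ℝ) ≠ 0 := Nat.cast_ne_zero.mpr hc
  have hαr : (α : ℝ) ≠ 0 := Nat.cast_ne_zero.mpr hα0
  have hnne : ((n₀ + k : ℕ) : ℝ) ≠ 0 := Nat.cast_ne_zero.mpr hn1.ne'
  rw [hcf k]
  push_cast
  rw [Real.log_mul hne (pow_ne_zero _ hαr), Real.log_pow]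
  field_simp
  ring
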